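/- Let v₀,…,vₙ be points (regarded as vectors) in a real inner product space and let A be the associated (n+2)×(n+2) circumcenter-system matrix. Let G be the n×n Gram matrix with entries G_{jk} = ⟨vⱼ − v₀, vₖ − v₀⟩ for 1 ≤ j,k ≤ n. Then det(A) = −2ⁿ · det(G). In particular det(A) ≤ 0 always, and det(A) < 0 whenever v₀,…,vₙ are affinely independent. (When the points lie in ℝⁿ, det(G) = det(V)², where V is the n×n matrix whose columns are v₁−v₀,…,vₙ−v₀.) -/

import Mathlib

open scoped RealInnerProductSpace
open Finset

variable {F : Type*} [NormedAddCommGroup F] [InnerProductSpace ℝ F]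

/-- The `(n+2) × (n+2)` circumcenter-system matrix of the points `v₀, …, vₙ`:
`A i j = 2⟪vᵢ, vⱼ⟫` for `i, j ≤ n`, the last row and column are `1` except for a `0`
in the corner. -/
def circMatrix {n : ℕ} (v : Fin (n + 1) → F) : Matrix (Fin (n + 2)) (Fin (n + 2)) ℝ :=
  Matrix.of fun i j =>
    if hi : i = Fin.last (n + 1) then (if j = Fin.last (n + 1) then 0 else 1)
    else if hj : j = Fin.last (n + 1) then 1
    else 2 * ⟪v (i.castPred hi), v (j.castPred hj)⟫

/-- The Gram matrix of the vectors `v₁ − v₀, …, vₙ − v₀`. -/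
def gramMatrix {n : ℕ} (v : Fin (n + 1) → F) : Matrix (Fin n) (Fin n) ℝ :=
  Matrix.of fun j k => ⟪v j.succ - v 0, v k.succ - v 0⟫

section Aux

variable {n : ℕ}

/-- Coefficients for the first (row) and second (column) elementary operations. -/
def cOne (n : ℕ) : Fin (n + 2) → ℝ := fun i => if i = 0 ∨ i = Fin.last (n + 1) then 0 else 1

/-- Subtract row 0 from the middle rows. -/
noncomputable def mOne (v : Fin (n + 1) → F) : Matrix (Fin (n + 2)) (Fin (n + 2)) ℝ :=
  Matrix.of fun i j => circMatrix v i j - cOne n i * circMatrix v 0 j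

/-- Subtract column 0 from the middle columns. -/
noncomputable def mTwo (v : Fin (n + 1) → F) : Matrix (Fin (n + 2)) (Fin (n + 2)) ℝ :=
  Matrix.of fun i j => mOne v i j - cOne n j * mOne v i 0

/-- Coefficients for the third (row) operation. -/
noncomputable def cThree (v : Fin (n + 1) → F) : Fin (n + 2) → ℝ :=
  fun i => if i = Fin.last (n + 1) then 0 else mTwo v i 0

/-- Clear column 0 using the last row. -/
noncomputable def mThree (v : Fin (n + 1) → F) : Matrix (Fin (n + 2)) (Fin (n + 2)) ℝ :=
  Matrix.of fun i j => mTwo v i j - cThree v i * mTwo v (Fin.last (n + 1)) j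

/-- Coefficients for the fourth (column) operation. -/
noncomputable def cFour (v : Fin (n + 1) → F) : Fin (n + 2) → ℝ :=
  fun j => if j = Fin.last (n + 1) then 0 else mThree v 0 j

/-- Clear row 0 using the last column. -/
noncomputable def mFour (v : Fin (n + 1) → F) : Matrix (Fin (n + 2)) (Fin (n + 2)) ℝ :=
  Matrix.of fun i j => mThree v i j - cFour v j * mThree v i (Fin.last (n + 1))

lemma zero_ne_last : (0 : Fin (n + 2)) ≠ Fin.last (n + 1) := by
  simp [Fin.ext_iff]

lemma mid_ne_last (k : Fin n) : (k.succ.castSucc : Fin (n + 2)) ≠ Fin.last (n + 1) :=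
  (Fin.castSucc_lt_last _).ne

lemma mid_ne_zero (k : Fin n) : (k.succ.castSucc : Fin (n + 2)) ≠ 0 := by
  simp [Fin.ext_iff]

lemma det_circ_eq_det_mFour (v : Fin (n + 1) → F) :
    (circMatrix v).det = (mFour v).det := by
  have h1 : (circMatrix v).det = (mOne v).det := by
    apply Matrix.det_eq_of_forall_row_eq_smul_add_const (cOne n) 0 (by simp [cOne])
    intro i j
    simp only [mOne, cOne, Matrix.of_apply]
    simp [zero_ne_last (n := n)]
    try ring
  have h2 : (mOne v).det = (mTwo v).det := by
    rw [← Matrix.det_transpose (mOne v), ← Matrix.det_transpose (mTwo v)]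
    apply Matrix.det_eq_of_forall_row_eq_smul_add_const (cOne n) 0 (by simp [cOne])
    intro i j
    simp only [mTwo, cOne, Matrix.transpose_apply, Matrix.of_apply]
    simp [zero_ne_last (n := n)]
    try ring
  have h3 : (mTwo v).det = (mThree v).det := by
    apply Matrix.det_eq_of_forall_row_eq_smul_add_const (cThree v) (Fin.last (n + 1))
      (by simp [cThree])
    intro i j
    simp only [mThree, cThree, Matrix.of_apply]
    simp
    try ring
  have h4 : (mThree v).det = (mFour v).det := by
    rw [← Matrix.det_transpose (mThree v), ← Matrix.det_transpose (mFour v)]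
    apply Matrix.det_eq_of_forall_row_eq_smul_add_const (cFour v) (Fin.last (n + 1))
      (by simp [cFour])
    intro i j
    simp only [mFour, cFour, Matrix.transpose_apply, Matrix.of_apply]
    simp
    try ring
  rw [h1, h2, h3, h4]

/-- The reindexing equivalence putting the two special indices first. -/
noncomputable def specialEquiv (n : ℕ) : Fin 2 ⊕ Fin n ≃ Fin (n + 2) :=
  Equiv.ofBijective
    (Sum.elim (fun i => if i = 0 then (0 : Fin (n + 2)) else Fin.last (n + 1))
      (fun k => k.succ.castSucc))
    (by
      rw [Fintype.bijective_iff_injective_and_card]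
      refine ⟨?_, by simp; omega⟩
      rintro (i | k) (j | l) h <;>
        [fin_cases i <;> fin_cases j; fin_cases i; fin_cases j; skip] <;>
        simp_all <;> simp_all [Fin.ext_iff] <;> omega)

lemma mFour_submatrix (v : Fin (n + 1) → F) :
    (mFour v).submatrix (specialEquiv n) (specialEquiv n) =
      Matrix.fromBlocks !![0, 1; 1, 0] 0 0 ((2 : ℝ) • gramMatrix v) := by
  have h0 := zero_ne_last (n := n)
  ext i j
  rcases i with i | k <;> rcases j with j | l
  · fin_cases i <;> fin_cases j <;>
      simp [specialEquiv, mFour, mThree, mTwo, mOne, cOne, cThree, cFour, circMatrix, h0,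
        Matrix.submatrix_apply]
  · fin_cases i <;>
      simp [specialEquiv, mFour, mThree, mTwo, mOne, cOne, cThree, cFour, circMatrix, h0,
        mid_ne_last, mid_ne_zero, Fin.succ_ne_zero, Fin.castPred_zero, Matrix.submatrix_apply]
  · fin_cases j <;>
      simp [specialEquiv, mFour, mThree, mTwo, mOne, cOne, cThree, cFour, circMatrix, h0,
        mid_ne_last, mid_ne_zero, Fin.succ_ne_zero, Fin.castPred_zero, Matrix.submatrix_apply]
  · simp [specialEquiv, mFour, mThree, mTwo, mOne, cOne, cThree, cFour, circMatrix, gramMatrix,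
      h0, mid_ne_last, mid_ne_zero, Fin.succ_ne_zero, Fin.castPred_zero,
      Matrix.submatrix_apply, inner_sub_left, inner_sub_right, ← Fin.succ_castPred_eq_castPred_succ]
    try ring

end Aux

/-- The determinant of the circumcenter-system matrix equals `−2ⁿ` times the determinant
of the Gram matrix of the edge vectors at `v₀`; in particular it is always `≤ 0`, and it is
`< 0` when the points are affinely independent. -/
theorem det_circMatrix {n : ℕ} (v : Fin (n + 1) → F) :
    (circMatrix v).det = -(2 ^ n) * (gramMatrix v).det ∧
    (circMatrix v).det ≤ 0 ∧
    (AffineIndependent ℝ v → (circMatrix v).det < 0) := by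
  have key : (circMatrix v).det = -(2 ^ n) * (gramMatrix v).det := by
    rw [det_circ_eq_det_mFour v, ← Matrix.det_submatrix_equiv_self (specialEquiv n),
      mFour_submatrix v, Matrix.det_fromBlocks_zero₂₁, Matrix.det_smul]
    simp [Matrix.det_fin_two_of]
    try ring
  -- quadratic form identity
  set w : Fin n → F := fun i => v i.succ - v 0 with hw
  have hquad : ∀ x : Fin n → ℝ,
      dotProduct x ((gramMatrix v).mulVec x) = ⟪∑ i, x i • w i, ∑ i, x i • w i⟫ := by
    intro x
    simp only [dotProduct, Matrix.mulVec, gramMatrix, Matrix.of_apply, sum_inner,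
      inner_sum, real_inner_smul_left, real_inner_smul_right]
    refine Finset.sum_congr rfl fun i _ => ?_
    rw [Finset.mul_sum]
    refine Finset.sum_congr rfl fun j _ => ?_
    simp only [hw]
    rw [real_inner_comm]
    ring
  have hherm : (gramMatrix v).IsHermitian := by
    unfold Matrix.IsHermitian
    ext i j
    simp [gramMatrix, Matrix.conjTranspose_apply, real_inner_comm]
  have hpsd : (gramMatrix v).PosSemidef := by
    refine Matrix.PosSemidef.of_dotProduct_mulVec_nonneg hherm fun x => ?_
    rw [star_trivial, hquad]
    exact real_inner_self_nonneg
  have hdetG : 0 ≤ (gramMatrix v).det := by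
    rw [hherm.det_eq_prod_eigenvalues]
    exact Finset.prod_nonneg fun i _ => by exact_mod_cast hpsd.eigenvalues_nonneg i
  refine ⟨key, by nlinarith [pow_pos (zero_lt_two (α := ℝ)) n], fun hai => ?_⟩
  -- affine independence gives linear independence of the `w i`
  have hli : LinearIndependent ℝ w := by
    have h := (affineIndependent_iff_linearIndependent_vsub ℝ v 0).mp hai
    have hinj : Function.Injective
        (fun k : Fin n => (⟨k.succ, Fin.succ_ne_zero k⟩ : {x : Fin (n + 1) // x ≠ 0})) := by
      intro a b hab
      simpa [Fin.ext_iff] using hab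
    have h2 := h.comp _ hinj
    have hwe : w = (fun i : {x : Fin (n + 1) // x ≠ 0} => v i -ᵥ v 0) ∘
        (fun k : Fin n => (⟨k.succ, Fin.succ_ne_zero k⟩ : {x : Fin (n + 1) // x ≠ 0})) := by
      funext k
      simp [hw, vsub_eq_sub]
    rw [hwe]
    exact h2
  have hpd : (gramMatrix v).PosDef := by
    refine Matrix.PosDef.of_dotProduct_mulVec_pos hherm fun x hx => ?_
    rw [star_trivial, hquad]
    have hy : (∑ i, x i • w i) ≠ 0 := by
      intro hzero
      apply hx
      funext i
      exact Fintype.linearIndependent_iff.mp hli x hzero i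
    have hne : ⟪∑ i, x i • w i, ∑ i, x i • w i⟫ ≠ 0 := fun h => hy (inner_self_eq_zero.mp h)
    exact lt_of_le_of_ne real_inner_self_nonneg (Ne.symm hne)
  have : 0 < (gramMatrix v).det := hpd.det_pos
  nlinarith [pow_pos (zero_lt_two (α := ℝ)) n]
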